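/- arXiv:0908.4355 — 2 statements merged into one kernel-verified Lean document; each statement's English description precedes it below -/
import Mathlib

section
/- Let Ω ⊆ ℂⁿ be open, and let A, E ⊂⊂ Ω be non-pluripolar. Define h_E(z) = sup { f(z) − sup_E f : f ∈ PSH(Ω), sup_Ω f ≤ 0, sup_A f ≥ −1 }. Then for every z ∈ Ω, h_E(z) ≤ (u_{E,Ω}(z) + 1) / |sup_A u_{E,Ω}|, where u_{E,Ω} is the relative extremal function of E in Ω. -/
open MeasureTheory Metric Set

/-- Plurisubharmonicity for `EReal`-valued functions on an open set `Ω` of a complex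
normed space: upper semicontinuity together with the sub-mean value inequality on every
complex disc contained in `Ω`, the circle average being expressed via continuous majorants. -/
def IsPSHOnE {V : Type*} [NormedAddCommGroup V] [NormedSpace ℂ V]
    (u : V → EReal) (Ω : Set V) : Prop :=
  UpperSemicontinuousOn u Ω ∧
  ∀ a ∈ Ω, ∀ b : V, ∀ r : ℝ, 0 < r →
    (∀ w : ℂ, ‖w‖ ≤ r → a + w • b ∈ Ω) →
    ∀ g : ℝ → ℝ, Continuous g →
      (∀ θ : ℝ, u (a + (circleMap 0 r θ) • b) ≤ ((g θ : ℝ) : EReal)) →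
      u a ≤ (((2 * Real.pi)⁻¹ * ∫ θ in (0:ℝ)..(2 * Real.pi), g θ : ℝ) : EReal)

/-- Plurisubharmonicity for real-valued functions. -/
def IsPSHOn {V : Type*} [NormedAddCommGroup V] [NormedSpace ℂ V]
    (f : V → ℝ) (Ω : Set V) : Prop :=
  IsPSHOnE (fun z => ((f z : ℝ) : EReal)) Ω

/-- A set is pluripolar if it is contained in the `-∞` set of a plurisubharmonic
function on the whole space which is not identically `-∞`. -/
def IsPluripolar {V : Type*} [NormedAddCommGroup V] [NormedSpace ℂ V] (E : Set V) : Prop :=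
  ∃ u : V → EReal, IsPSHOnE u Set.univ ∧ (¬ ∀ z, u z = ⊥) ∧ ∀ z ∈ E, u z = ⊥

/-- The Lelong class: entire plurisubharmonic functions of at most logarithmic growth. -/
def InLelongClass {V : Type*} [NormedAddCommGroup V] [NormedSpace ℂ V] (f : V → ℝ) : Prop :=
  IsPSHOn f Set.univ ∧ ∃ C : ℝ, ∀ z, f z ≤ Real.log (max ‖z‖ 1) + C

/-- The Siciak extremal function of a set `E`. -/
noncomputable def siciak {V : Type*} [NormedAddCommGroup V] [NormedSpace ℂ V]
    (E : Set V) (z : V) : ℝ :=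
  sSup {y | ∃ f : V → ℝ, InLelongClass f ∧ (∀ x ∈ E, f x ≤ 0) ∧ y = f z}

/-- The relative extremal function of `E` in `Ω`. -/
noncomputable def relExtremal {V : Type*} [NormedAddCommGroup V] [NormedSpace ℂ V]
    (E Ω : Set V) (z : V) : ℝ :=
  sSup {y | ∃ f : V → ℝ, IsPSHOn f Ω ∧ (∀ x ∈ Ω, f x ≤ 0) ∧ (∀ x ∈ E, f x ≤ -1) ∧ y = f z}

/-- The function `h_E` measuring local growth of plurisubharmonic functions. -/
noncomputable def hFun {V : Type*} [NormedAddCommGroup V] [NormedSpace ℂ V]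
    (A E Ω : Set V) (z : V) : ℝ :=
  sSup {y | ∃ f : V → ℝ, IsPSHOn f Ω ∧ (∀ x ∈ Ω, f x ≤ 0) ∧ -1 ≤ sSup (f '' A) ∧
    y = f z - sSup (f '' E)}

/-- The inclusion of `ℝⁿ` into `ℂⁿ`. -/
noncomputable def embedR {n : ℕ} (x : EuclideanSpace ℝ (Fin n)) : EuclideanSpace ℂ (Fin n) :=
  WithLp.toLp 2 (fun i => ((x i : ℝ) : ℂ))

/-- `γ` is the Siciak (logarithmic) capacity of `E`:
`limsup_{s→∞} ( sup_{B_c(0,s)} V_E − log s ) = −log γ`. -/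
def HasSiciakCapacity {V : Type*} [NormedAddCommGroup V] [NormedSpace ℂ V]
    (E : Set V) (γ : ℝ) : Prop :=
  Filter.limsup (fun s : ℝ => sSup (siciak E '' Metric.closedBall (0 : V) s) - Real.log s)
    Filter.atTop = -Real.log γ

variable {V : Type*} [NormedAddCommGroup V] [NormedSpace ℂ V]

lemma psh_const (c : ℝ) (Ω : Set V) : IsPSHOn (fun _ => c) Ω := by
  constructor
  · exact upperSemicontinuousOn_const
  · intro a _ b r hr _ g hg hle
    rw [EReal.coe_le_coe_iff]
    have h1 : ∀ θ : ℝ, c ≤ g θ := fun θ => EReal.coe_le_coe_iff.mp (hle θ)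
    have h2 : (∫ θ in (0:ℝ)..(2*Real.pi), c) ≤ ∫ θ in (0:ℝ)..(2*Real.pi), g θ :=
      intervalIntegral.integral_mono_on (by positivity)
        (intervalIntegrable_const) (hg.intervalIntegrable _ _) (fun x _ => h1 x)
    rw [intervalIntegral.integral_const, sub_zero, smul_eq_mul] at h2
    calc c = (2*Real.pi)⁻¹ * (2*Real.pi * c) := by
            field_simp
      _ ≤ (2*Real.pi)⁻¹ * ∫ θ in (0:ℝ)..(2*Real.pi), g θ := by
            apply mul_le_mul_of_nonneg_left h2 (by positivity)

lemma psh_smul {f : V → ℝ} {Ω : Set V} (hf : IsPSHOn f Ω) {c : ℝ} (hc : 0 < c) :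
    IsPSHOn (fun x => c * f x) Ω := by
  obtain ⟨husc, hm⟩ := hf
  constructor
  · intro x hx y hy
    induction y using EReal.rec with
    | bot => exact absurd hy (by simp)
    | top => exact Filter.Eventually.of_forall (fun z => EReal.coe_lt_top _)
    | coe r =>
        have h1 : f x < r / c := by
          rw [EReal.coe_lt_coe_iff] at hy
          exact (lt_div_iff₀' hc).mpr hy
        have := husc x hx ((r/c : ℝ) : EReal) (EReal.coe_lt_coe_iff.mpr h1)
        refine this.mono fun z hz => ?_
        beta_reduce at hz ⊢
        rw [EReal.coe_lt_coe_iff] at hz ⊢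
        calc c * f z < c * (r/c) := by exact mul_lt_mul_of_pos_left hz hc
          _ = r := by field_simp
  · intro a ha b r hr hsub g hg hle
    have hle' : ∀ θ : ℝ, ((f (a + (circleMap 0 r θ) • b) : ℝ) : EReal) ≤ ((g θ / c : ℝ) : EReal) := by
      intro θ
      rw [EReal.coe_le_coe_iff]
      have := EReal.coe_le_coe_iff.mp (hle θ)
      exact (le_div_iff₀' hc).mpr this
    have := hm a ha b r hr hsub (fun θ => g θ / c) (hg.div_const c) hle'
    rw [EReal.coe_le_coe_iff] at this ⊢
    rw [intervalIntegral.integral_div] at this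
    calc c * f a ≤ c * ((2*Real.pi)⁻¹ * ((∫ θ in (0:ℝ)..(2*Real.pi), g θ) / c)) :=
          mul_le_mul_of_nonneg_left this hc.le
      _ = (2*Real.pi)⁻¹ * ∫ θ in (0:ℝ)..(2*Real.pi), g θ := by field_simp

lemma psh_max {f g : V → ℝ} {Ω : Set V} (hf : IsPSHOn f Ω) (hg : IsPSHOn g Ω) :
    IsPSHOn (fun x => max (f x) (g x)) Ω := by
  obtain ⟨husc1, hm1⟩ := hf
  obtain ⟨husc2, hm2⟩ := hg
  constructor
  · intro x hx y hy
    simp only at hy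
    have hy : ((f x : ℝ) : EReal) < y ∧ ((g x : ℝ) : EReal) < y := by
      rcases le_total (f x) (g x) with h | h
      · rw [max_eq_right h] at hy
        exact ⟨lt_of_le_of_lt (EReal.coe_le_coe_iff.mpr h) hy, hy⟩
      · rw [max_eq_left h] at hy
        exact ⟨hy, lt_of_le_of_lt (EReal.coe_le_coe_iff.mpr h) hy⟩
    filter_upwards [husc1 x hx y hy.1, husc2 x hx y hy.2] with z h1 h2
    rcases le_total (f z) (g z) with h | h
    · simpa [max_eq_right h] using h2
    · simpa [max_eq_left h] using h1
  · intro a ha b r hr hsub G hG hle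
    have l1 : ∀ θ : ℝ, ((f (a + (circleMap 0 r θ) • b) : ℝ) : EReal) ≤ ((G θ : ℝ) : EReal) := by
      intro θ
      refine le_trans ?_ (hle θ)
      exact EReal.coe_le_coe_iff.mpr (le_max_left _ _)
    have l2 : ∀ θ : ℝ, ((g (a + (circleMap 0 r θ) • b) : ℝ) : EReal) ≤ ((G θ : ℝ) : EReal) := by
      intro θ
      refine le_trans ?_ (hle θ)
      exact EReal.coe_le_coe_iff.mpr (le_max_right _ _)
    have h1 := hm1 a ha b r hr hsub G hG l1
    have h2 := hm2 a ha b r hr hsub G hG l2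
    rw [EReal.coe_le_coe_iff] at h1 h2 ⊢
    exact max_le h1 h2

lemma nonempty_of_not_pluripolar {W : Type*} [NormedAddCommGroup W] [NormedSpace ℂ W]
    [Nonempty W] {E : Set W} (h : ¬ IsPluripolar E) : E.Nonempty := by
  rw [Set.nonempty_iff_ne_empty]
  rintro rfl
  exact h ⟨fun _ => ((0:ℝ) : EReal), psh_const 0 Set.univ,
    fun hall => by simpa using hall (Classical.arbitrary W),
    fun z hz => hz.elim⟩

/-- upper bound for `h_E` by the relative extremal function. -/
theorem hFun_le_relExtremal {n : ℕ} (Ω A E : Set (EuclideanSpace ℂ (Fin n)))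
    (hΩ : IsOpen Ω)
    (hAc : IsCompact (closure A)) (hAΩ : closure A ⊆ Ω)
    (hEc : IsCompact (closure E)) (hEΩ : closure E ⊆ Ω)
    (hAnp : ¬ IsPluripolar A) (hEnp : ¬ IsPluripolar E) :
    ∀ z ∈ Ω, hFun A E Ω z ≤ (relExtremal E Ω z + 1) / |sSup (relExtremal E Ω '' A)| := by
  intro z hz
  have hAsub : A ⊆ Ω := subset_closure.trans hAΩ
  have hEsub : E ⊆ Ω := subset_closure.trans hEΩ
  have hAne : A.Nonempty := nonempty_of_not_pluripolar hAnp
  have hEne : E.Nonempty := nonempty_of_not_pluripolar hEnp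
  set u : EuclideanSpace ℂ (Fin n) → ℝ := relExtremal E Ω with hu
  -- basic facts about u
  have hu_le_zero : ∀ x ∈ Ω, u x ≤ 0 := by
    intro x hx
    refine Real.sSup_le ?_ le_rfl
    rintro y ⟨f, -, h0, -, rfl⟩
    exact h0 x hx
  have hrel_bdd : ∀ x : EuclideanSpace ℂ (Fin n), x ∈ Ω →
      BddAbove {y | ∃ f, IsPSHOn f Ω ∧ (∀ x ∈ Ω, f x ≤ 0) ∧ (∀ x ∈ E, f x ≤ -1) ∧ y = f x} := by
    intro x hx
    refine ⟨0, ?_⟩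
    rintro y ⟨f, -, h0, -, rfl⟩
    exact h0 x hx
  have hconst_mem : ∀ x : EuclideanSpace ℂ (Fin n),
      (-1 : ℝ) ∈ {y | ∃ f, IsPSHOn f Ω ∧ (∀ x ∈ Ω, f x ≤ 0) ∧ (∀ x ∈ E, f x ≤ -1) ∧ y = f x} :=
    fun x => ⟨fun _ => (-1 : ℝ), psh_const (-1) Ω, fun _ _ => by norm_num, fun _ _ => le_rfl,
      rfl⟩
  have hu_ge : ∀ x ∈ Ω, (-1 : ℝ) ≤ u x := fun x hx =>
    le_csSup (hrel_bdd x hx) (hconst_mem x)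
  have hcand_le : ∀ f : EuclideanSpace ℂ (Fin n) → ℝ, IsPSHOn f Ω → (∀ x ∈ Ω, f x ≤ 0) →
      (∀ x ∈ E, f x ≤ -1) → ∀ x ∈ Ω, f x ≤ u x := by
    intro f h1 h2 h3 x hx
    exact le_csSup (hrel_bdd x hx) ⟨f, h1, h2, h3, rfl⟩
  set S : ℝ := sSup (u '' A) with hSdef
  have huA_bdd : BddAbove (u '' A) := by
    refine ⟨0, ?_⟩
    rintro y ⟨a, ha, rfl⟩
    exact hu_le_zero a (hAsub ha)
  have hS_le : S ≤ 0 := by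
    refine Real.sSup_le ?_ le_rfl
    rintro y ⟨a, ha, rfl⟩
    exact hu_le_zero a (hAsub ha)
  have hnum : (0:ℝ) ≤ u z + 1 := by linarith [hu_ge z hz]
  rcases hS_le.lt_or_eq with hS | hS
  · -- S < 0 : the main estimate
    have habs : |S| = -S := abs_of_nonpos hS.le
    rw [habs]
    refine Real.sSup_le ?_ (div_nonneg hnum (by linarith))
    rintro y ⟨f, hfp, hf0, hfA, rfl⟩
    set M : ℝ := sSup (f '' E) with hMdef
    have hfE_bdd : BddAbove (f '' E) := by
      refine ⟨0, ?_⟩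
      rintro y ⟨x, hx, rfl⟩
      exact hf0 x (hEsub hx)
    have hM_le : M ≤ 0 := by
      refine Real.sSup_le ?_ le_rfl
      rintro y ⟨x, hx, rfl⟩
      exact hf0 x (hEsub hx)
    rcases hM_le.lt_or_eq with hM | hM
    · -- M < 0
      have hMne : M ≠ 0 := hM.ne
      set c : ℝ := (-M)⁻¹ with hcdef
      have hc : (0:ℝ) < c := inv_pos.mpr (by linarith)
      have hg0 : ∀ x ∈ Ω, c * f x ≤ 0 := fun x hx =>
        mul_nonpos_iff.mpr (Or.inl ⟨hc.le, hf0 x hx⟩)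
      have hgE : ∀ x ∈ E, c * f x ≤ -1 := by
        intro x hx
        have h1 : f x ≤ M := le_csSup hfE_bdd (Set.mem_image_of_mem f hx)
        have h2 : c * f x ≤ c * M := mul_le_mul_of_nonneg_left h1 hc.le
        have h3 : c * M = -1 := by rw [hcdef, inv_mul_eq_div, div_neg, div_self hMne]
        linarith
      have hgu : ∀ x ∈ Ω, c * f x ≤ u x :=
        hcand_le (fun x => c * f x) (psh_smul hfp hc) hg0 hgE
      have hfz : f z ≤ (-M) * u z := by
        have := mul_le_mul_of_nonneg_left (hgu z hz) (by linarith : (0:ℝ) ≤ -M)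
        calc f z = (-M) * (c * f z) := by rw [hcdef, ← mul_assoc, mul_inv_cancel₀ (neg_ne_zero.mpr hMne), one_mul]
          _ ≤ (-M) * u z := this
      have hfa : ∀ a ∈ A, f a ≤ (-M) * S := by
        intro a ha
        have h1 := mul_le_mul_of_nonneg_left (hgu a (hAsub ha)) (by linarith : (0:ℝ) ≤ -M)
        have h2 : u a ≤ S := le_csSup huA_bdd (Set.mem_image_of_mem u ha)
        calc f a = (-M) * (c * f a) := by rw [hcdef, ← mul_assoc, mul_inv_cancel₀ (neg_ne_zero.mpr hMne), one_mul]
          _ ≤ (-M) * u a := h1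
          _ ≤ (-M) * S := mul_le_mul_of_nonneg_left h2 (by linarith)
      have hsupA : sSup (f '' A) ≤ (-M) * S := by
        refine csSup_le (hAne.image f) ?_
        rintro y ⟨a, ha, rfl⟩
        exact hfa a ha
      have hMS : (-M) * (-S) ≤ 1 := by nlinarith [hfA]
      rw [le_div_iff₀ (by linarith : (0:ℝ) < -S)]
      nlinarith [hfz, hMS, hnum, mul_le_mul_of_nonneg_right hMS hnum]
    · -- M = 0
      have : f z ≤ 0 := hf0 z hz
      rw [hM, sub_zero]
      have hrhs : (0:ℝ) ≤ (u z + 1) / (-S) := div_nonneg hnum (by linarith)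
      linarith
  · -- S = 0 : show hFun ≤ 0
    rw [hS, abs_zero, div_zero]
    by_contra hcon
    push_neg at hcon
    set Sset := {y | ∃ f : EuclideanSpace ℂ (Fin n) → ℝ, IsPSHOn f Ω ∧ (∀ x ∈ Ω, f x ≤ 0) ∧
      -1 ≤ sSup (f '' A) ∧ y = f z - sSup (f '' E)} with hSset
    have hbdd : BddAbove Sset := by
      by_contra hnb
      rw [show hFun A E Ω z = sSup Sset from rfl, Real.sSup_of_not_bddAbove hnb] at hcon
      exact lt_irrefl _ hcon
    have hne : Sset.Nonempty := by
      rw [Set.nonempty_iff_ne_empty]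
      rintro h
      rw [show hFun A E Ω z = sSup Sset from rfl, h, Real.sSup_empty] at hcon
      exact lt_irrefl _ hcon
    obtain ⟨y, hy, hy0⟩ := exists_lt_of_lt_csSup hne hcon
    obtain ⟨f, hfp, hf0, hfA, rfl⟩ := hy
    set M : ℝ := sSup (f '' E) with hMdef
    have hfE_bdd : BddAbove (f '' E) := by
      refine ⟨0, ?_⟩
      rintro y ⟨x, hx, rfl⟩
      exact hf0 x (hEsub hx)
    have hM_le : M ≤ 0 := by
      refine Real.sSup_le ?_ le_rfl
      rintro y ⟨x, hx, rfl⟩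
      exact hf0 x (hEsub hx)
    have hfz0 : f z ≤ 0 := hf0 z hz
    have hM : M < 0 := by
      rcases hM_le.lt_or_eq with h | h
      · exact h
      · exfalso; rw [← h] at hy0; linarith
    obtain ⟨B, hB⟩ := hbdd
    -- parameters
    set s : ℝ := (-M) * (|B| + 1) / (f z - M) with hsdef
    have hyz : (0:ℝ) < f z - M := by linarith
    have hs : (0:ℝ) < s := by
      apply div_pos
      · have : (0:ℝ) < |B| + 1 := by positivity
        nlinarith
      · exact hyz
    set t : ℝ := s / (-M) with htdef
    have ht : (0:ℝ) < t := div_pos hs (by linarith)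
    -- find a ∈ A and candidate p with p a > -1/s
    have huAne : (u '' A).Nonempty := hAne.image u
    have h1s : -1/s < sSup (u '' A) := by
      rw [← hSdef, hS]
      exact div_neg_of_neg_of_pos (by norm_num) hs
    obtain ⟨ya, hya, hya2⟩ := exists_lt_of_lt_csSup huAne h1s
    obtain ⟨a, haA, rfl⟩ := hya
    have hrelne : {y | ∃ f, IsPSHOn f Ω ∧ (∀ x ∈ Ω, f x ≤ 0) ∧ (∀ x ∈ E, f x ≤ -1) ∧
        y = f a}.Nonempty := ⟨-1, hconst_mem a⟩
    obtain ⟨yp, hyp, hyp2⟩ := exists_lt_of_lt_csSup hrelne hya2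
    obtain ⟨p, hp1, hp2, hp3, rfl⟩ := hyp
    -- the competitor g
    set g : EuclideanSpace ℂ (Fin n) → ℝ := fun x => max (t * f x) (s * p x) with hgdef
    have hgp : IsPSHOn g Ω := psh_max (psh_smul hfp ht) (psh_smul hp1 hs)
    have hg0 : ∀ x ∈ Ω, g x ≤ 0 := by
      intro x hx
      refine max_le ?_ ?_
      · exact mul_nonpos_iff.mpr (Or.inl ⟨ht.le, hf0 x hx⟩)
      · exact mul_nonpos_iff.mpr (Or.inl ⟨hs.le, hp2 x hx⟩)
    have hgA_bdd : BddAbove (g '' A) := by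
      refine ⟨0, ?_⟩
      rintro y ⟨x, hx, rfl⟩
      exact hg0 x (hAsub hx)
    have hgA : -1 ≤ sSup (g '' A) := by
      have h1 : -1 < s * p a := by
        have := mul_lt_mul_of_pos_left hyp2 hs
        have hss : s * (-1/s) = -1 := by field_simp
        linarith [hss ▸ this]
      have h2 : s * p a ≤ g a := le_max_right _ _
      have h3 : g a ≤ sSup (g '' A) := le_csSup hgA_bdd (Set.mem_image_of_mem g haA)
      linarith
    have hgE : sSup (g '' E) ≤ -s := by
      refine csSup_le (hEne.image g) ?_
      rintro y ⟨x, hx, rfl⟩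
      refine max_le ?_ ?_
      · have h1 : f x ≤ M := le_csSup hfE_bdd (Set.mem_image_of_mem f hx)
        have h2 : t * f x ≤ t * M := mul_le_mul_of_nonneg_left h1 ht.le
        have h3 : t * M = -s := by
          rw [htdef, div_mul_eq_mul_div, div_eq_iff (by linarith : -M ≠ 0)]
          ring
        linarith
      · have h1 : p x ≤ -1 := hp3 x hx
        have h2 : s * p x ≤ s * (-1) := mul_le_mul_of_nonneg_left h1 hs.le
        linarith
    have hmem : g z - sSup (g '' E) ∈ Sset := ⟨g, hgp, hg0, hgA, rfl⟩
    have hval : |B| + 1 ≤ g z - sSup (g '' E) := by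
      have h1 : t * f z ≤ g z := le_max_left _ _
      have h2 : g z - sSup (g '' E) ≥ t * f z + s := by linarith [hgE]
      have hts : t * M = -s := by
        rw [htdef, div_mul_eq_mul_div, div_eq_iff (by linarith : -M ≠ 0)]
        ring
      have h3 : t * f z + s = t * (f z - M) := by
        rw [mul_sub, hts]; ring
      have h4 : t * (f z - M) = |B| + 1 := by
        have hM0 : M ≠ 0 := hM.ne
        have hz0 : f z - M ≠ 0 := ne_of_gt hyz
        rw [htdef, hsdef]
        field_simp
      linarith
    have := hB hmem
    have hBB := le_abs_self B
    linarith
end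

section
/- Let Ω ⊆ ℂⁿ be open, let A, E ⊂⊂ Ω be non-pluripolar, and suppose the relative extremal function u_{E,Ω} is continuous on Ω. Then for every z ∈ Ω, h_E(z) = (u_{E,Ω}(z) + 1) / |sup_A u_{E,Ω}|. -/
open MeasureTheory Metric Set

section helpers
variable {V : Type*} [NormedAddCommGroup V] [NormedSpace ℂ V] {Ω : Set V}

lemma usc_coe_of_usc {f : V → ℝ} (h : UpperSemicontinuousOn f Ω) :
    UpperSemicontinuousOn (fun z => ((f z : ℝ) : EReal)) Ω := by
  intro x hx y hy
  cases y with
  | bot => exact absurd hy (by simp)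
  | top => filter_upwards with z using EReal.coe_lt_top _
  | coe y =>
      have : f x < y := EReal.coe_lt_coe_iff.mp hy
      filter_upwards [h x hx y this] with z hz using EReal.coe_lt_coe_iff.mpr hz

lemma isPSHOn_const (k : ℝ) : IsPSHOn (fun _ => k) Ω := by
  constructor
  · exact usc_coe_of_usc (continuousOn_const.upperSemicontinuousOn)
  · intro a _ b r hr _ g hg hmaj
    have hle : ∀ θ : ℝ, k ≤ g θ := fun θ => EReal.coe_le_coe_iff.mp (hmaj θ)
    have hπ : (0:ℝ) < 2 * Real.pi := by positivity
    have h1 : ∫ θ in (0:ℝ)..(2*Real.pi), k = (2*Real.pi - 0) * k := by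
      simp [intervalIntegral.integral_const, smul_eq_mul]
    have h2 : ∫ θ in (0:ℝ)..(2*Real.pi), k ≤ ∫ θ in (0:ℝ)..(2*Real.pi), g θ :=
      intervalIntegral.integral_mono_on hπ.le (intervalIntegrable_const) (hg.intervalIntegrable _ _)
        (fun x _ => hle x)
    have : k ≤ (2*Real.pi)⁻¹ * ∫ θ in (0:ℝ)..(2*Real.pi), g θ := by
      rw [h1] at h2
      have h3 := mul_le_mul_of_nonneg_left h2 (inv_nonneg.mpr hπ.le)
      calc k = (2*Real.pi)⁻¹ * ((2*Real.pi - 0) * k) := by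
                field_simp
                ring
        _ ≤ _ := h3
    exact EReal.coe_le_coe_iff.mpr this

lemma nonempty_of_not_pluripolar_s2 {S : Set V} (h : ¬ IsPluripolar S) : S.Nonempty := by
  rw [nonempty_iff_ne_empty]
  rintro rfl
  refine h ⟨fun _ => (0:EReal), ?_, ?_, by simp⟩
  · constructor
    · exact usc_coe_of_usc (Ω := univ) (f := fun _ => (0:ℝ))
        continuousOn_const.upperSemicontinuousOn
    · intro a _ b r hr _ g hg hmaj
      have hle : ∀ θ : ℝ, (0:ℝ) ≤ g θ := fun θ => EReal.coe_le_coe_iff.mp (by exact hmaj θ)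
      have hπ : (0:ℝ) ≤ 2 * Real.pi := by positivity
      have : (0:ℝ) ≤ (2*Real.pi)⁻¹ * ∫ θ in (0:ℝ)..(2*Real.pi), g θ := by
        have : (0:ℝ) ≤ ∫ θ in (0:ℝ)..(2*Real.pi), g θ :=
          intervalIntegral.integral_nonneg hπ (fun x _ => hle x)
        positivity
      exact EReal.coe_le_coe_iff.mpr this
  · intro h'
    simpa using h' 0

lemma IsPSHOn.const_mul {f : V → ℝ} {c : ℝ} (hc : 0 < c) (hf : IsPSHOn f Ω) :
    IsPSHOn (fun z => c * f z) Ω := by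
  obtain ⟨husc, hsub⟩ := hf
  constructor
  · -- upper semicontinuity
    apply usc_coe_of_usc
    intro x hx y hy
    have hx' : (f x : EReal) < ((y / c : ℝ) : EReal) := by
      exact_mod_cast (lt_div_iff₀' hc).mpr hy
    filter_upwards [husc x hx _ hx'] with z hz
    have : f z < y / c := by exact_mod_cast hz
    exact (lt_div_iff₀' hc).mp this
  · intro a ha b r hr hball g hg hmaj
    have hmaj' : ∀ θ : ℝ, ((f (a + (circleMap 0 r θ) • b) : ℝ) : EReal) ≤
        ((c⁻¹ * g θ : ℝ) : EReal) := by
      intro θ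
      have h2 : c * f (a + (circleMap 0 r θ) • b) ≤ g θ := EReal.coe_le_coe_iff.mp (hmaj θ)
      exact EReal.coe_le_coe_iff.mpr ((le_inv_mul_iff₀ hc).mpr h2)
    have := hsub a ha b r hr hball (fun θ => c⁻¹ * g θ) (by fun_prop) hmaj'
    have h3 : f a ≤ (2*Real.pi)⁻¹ * ∫ θ in (0:ℝ)..(2*Real.pi), c⁻¹ * g θ :=
      EReal.coe_le_coe_iff.mp this
    rw [intervalIntegral.integral_const_mul] at h3
    have h4 : c * f a ≤ (2*Real.pi)⁻¹ * ∫ θ in (0:ℝ)..(2*Real.pi), g θ := by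
      have := mul_le_mul_of_nonneg_left h3 hc.le
      calc c * f a ≤ c * ((2*Real.pi)⁻¹ * (c⁻¹ * ∫ θ in (0:ℝ)..(2*Real.pi), g θ)) := this
        _ = (c * c⁻¹) * ((2*Real.pi)⁻¹ * ∫ θ in (0:ℝ)..(2*Real.pi), g θ) := by ring
        _ = (2*Real.pi)⁻¹ * ∫ θ in (0:ℝ)..(2*Real.pi), g θ := by
            rw [mul_inv_cancel₀ hc.ne', one_mul]
    exact EReal.coe_le_coe_iff.mpr h4

end helpers

section rel
variable {V : Type*} [NormedAddCommGroup V] [NormedSpace ℂ V] {E Ω : Set V}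

lemma relSet_nonempty (z : V) :
    {y | ∃ f : V → ℝ, IsPSHOn f Ω ∧ (∀ x ∈ Ω, f x ≤ 0) ∧ (∀ x ∈ E, f x ≤ -1) ∧
      y = f z}.Nonempty :=
  ⟨-1, fun _ => (-1:ℝ), isPSHOn_const _, fun _ _ => by norm_num, fun _ _ => le_refl _, rfl⟩

lemma relSet_bddAbove {z : V} (hz : z ∈ Ω) :
    BddAbove {y | ∃ f : V → ℝ, IsPSHOn f Ω ∧ (∀ x ∈ Ω, f x ≤ 0) ∧ (∀ x ∈ E, f x ≤ -1) ∧
      y = f z} := by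
  refine ⟨0, ?_⟩
  rintro y ⟨f, _, hf0, _, rfl⟩
  exact hf0 z hz

lemma candidate_le_relExtremal {f : V → ℝ} (hfpsh : IsPSHOn f Ω) (hf0 : ∀ x ∈ Ω, f x ≤ 0)
    (hfE : ∀ x ∈ E, f x ≤ -1) {z : V} (hz : z ∈ Ω) : f z ≤ relExtremal E Ω z :=
  le_csSup (relSet_bddAbove hz) ⟨f, hfpsh, hf0, hfE, rfl⟩

lemma relExtremal_nonpos {z : V} (hz : z ∈ Ω) : relExtremal E Ω z ≤ 0 := by
  refine csSup_le (relSet_nonempty z) ?_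
  rintro y ⟨f, _, hf0, _, rfl⟩
  exact hf0 z hz

lemma neg_one_le_relExtremal {z : V} (hz : z ∈ Ω) : -1 ≤ relExtremal E Ω z :=
  candidate_le_relExtremal (isPSHOn_const _) (fun _ _ => by norm_num) (fun _ _ => le_refl _) hz

lemma relExtremal_le_neg_one {z : V} (hz : z ∈ E) : relExtremal E Ω z ≤ -1 := by
  refine csSup_le (relSet_nonempty z) ?_
  rintro y ⟨f, _, _, hfE, rfl⟩
  exact hfE z hz

lemma isPSHOn_relExtremal (hcont : ContinuousOn (relExtremal E Ω) Ω) :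
    IsPSHOn (relExtremal E Ω) Ω := by
  constructor
  · exact usc_coe_of_usc hcont.upperSemicontinuousOn
  · intro a ha b r hr hball g hg hmaj
    refine EReal.coe_le_coe_iff.mpr ?_
    refine csSup_le (relSet_nonempty a) ?_
    rintro y ⟨f, hfpsh, hf0, hfE, rfl⟩
    have hmaj' : ∀ θ : ℝ, ((f (a + circleMap 0 r θ • b) : ℝ) : EReal) ≤ ((g θ : ℝ) : EReal) := by
      intro θ
      have hmem : a + circleMap 0 r θ • b ∈ Ω := by
        refine hball _ ?_
        rw [norm_circleMap_zero]
        exact (abs_of_pos hr).le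
      have h1 : f (a + circleMap 0 r θ • b) ≤ relExtremal E Ω (a + circleMap 0 r θ • b) :=
        candidate_le_relExtremal hfpsh hf0 hfE hmem
      have h2 : relExtremal E Ω (a + circleMap 0 r θ • b) ≤ g θ :=
        EReal.coe_le_coe_iff.mp (hmaj θ)
      exact EReal.coe_le_coe_iff.mpr (h1.trans h2)
    exact EReal.coe_le_coe_iff.mp (hfpsh.2 a ha b r hr hball g hg hmaj')

end rel


/-- when `u_{E,Ω}` is continuous, `h_E` equals `(u_{E,Ω} + 1)/|sup_A u_{E,Ω}|`. -/
theorem hFun_eq_of_continuous {n : ℕ} (Ω A E : Set (EuclideanSpace ℂ (Fin n)))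
    (hΩ : IsOpen Ω)
    (hAc : IsCompact (closure A)) (hAΩ : closure A ⊆ Ω)
    (hEc : IsCompact (closure E)) (hEΩ : closure E ⊆ Ω)
    (hAnp : ¬ IsPluripolar A) (hEnp : ¬ IsPluripolar E)
    (hcont : ContinuousOn (relExtremal E Ω) Ω) :
    ∀ z ∈ Ω, hFun A E Ω z = (relExtremal E Ω z + 1) / |sSup (relExtremal E Ω '' A)| := by
  intro z hz
  have hA : A.Nonempty := nonempty_of_not_pluripolar_s2 hAnp
  have hE : E.Nonempty := nonempty_of_not_pluripolar_s2 hEnp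
  have hAsub : A ⊆ Ω := subset_closure.trans hAΩ
  have hEsub : E ⊆ Ω := subset_closure.trans hEΩ
  set u := relExtremal E Ω with hu
  set s := sSup (u '' A) with hs
  set S := {y | ∃ f : EuclideanSpace ℂ (Fin n) → ℝ, IsPSHOn f Ω ∧
    (∀ x ∈ Ω, f x ≤ 0) ∧ -1 ≤ sSup (f '' A) ∧ y = f z - sSup (f '' E)} with hSdef
  have hgoal : hFun A E Ω z = sSup S := rfl
  have hupsh : IsPSHOn u Ω := isPSHOn_relExtremal hcont
  have hu0 : ∀ x ∈ Ω, u x ≤ 0 := fun x hx => relExtremal_nonpos hx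
  have hu1 : ∀ x ∈ Ω, -1 ≤ u x := fun x hx => neg_one_le_relExtremal hx
  have huE : ∀ x ∈ E, u x = -1 := fun x hx =>
    le_antisymm (relExtremal_le_neg_one hx) (hu1 x (hEsub hx))
  have hbddA : BddAbove (u '' A) := ⟨0, by rintro _ ⟨x, hx, rfl⟩; exact hu0 x (hAsub hx)⟩
  have hsle : s ≤ 0 := csSup_le (hA.image u) (by rintro _ ⟨x, hx, rfl⟩; exact hu0 x (hAsub hx))
  have huz1 : 0 ≤ u z + 1 := by linarith [hu1 z hz]
  -- image computations for scalar multiples of u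
  have himE' : ∀ c : ℝ, sSup ((fun x => c * u x) '' E) = -c := by
    intro c
    have himE : (fun x => c * u x) '' E = {-c} := by
      apply Set.eq_singleton_iff_nonempty_unique_mem.mpr
      refine ⟨hE.image _, ?_⟩
      rintro _ ⟨x, hx, rfl⟩
      show c * u x = -c
      rw [huE x hx]; ring
    rw [himE, csSup_singleton]
  have himA : ∀ c : ℝ, 0 < c → sSup ((fun x => c * u x) '' A) = c * s := by
    intro c hc
    have := Monotone.map_csSup_of_continuousAt (f := fun x : ℝ => c * x)
      ((continuous_const.mul continuous_id).continuousAt)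
      (fun a b hab => mul_le_mul_of_nonneg_left hab hc.le) (hA.image u) hbddA
    rw [Set.image_image] at this
    exact this.symm
  -- membership of c • u in the hFun candidate set
  have hmemS : ∀ c : ℝ, 0 < c → -1 ≤ c * s → (c * (u z + 1)) ∈ S := by
    intro c hc hcs
    refine ⟨fun x => c * u x, hupsh.const_mul hc, ?_, ?_, ?_⟩
    · intro x hx
      have := mul_le_mul_of_nonneg_left (hu0 x hx) hc.le
      simpa using this
    · rw [himA c hc]; exact hcs
    · rw [himE' c]; ring
  -- the key bound
  have key : ∀ y ∈ S, ∃ m : ℝ, 0 ≤ m ∧ y ≤ m * (u z + 1) ∧ -1 ≤ m * s := by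
    rintro y ⟨f, hfpsh, hf0, hfA, rfl⟩
    have hMbdd : BddAbove (f '' E) := ⟨0, by rintro _ ⟨x, hx, rfl⟩; exact hf0 x (hEsub hx)⟩
    have hME : sSup (f '' E) ≤ 0 :=
      csSup_le (hE.image f) (by rintro _ ⟨x, hx, rfl⟩; exact hf0 x (hEsub hx))
    rcases eq_or_lt_of_le hME with heq | hlt
    · refine ⟨0, le_refl 0, ?_, by simp⟩
      rw [heq]; simpa using hf0 z hz
    · set m := -(sSup (f '' E)) with hm
      have hm0 : 0 < m := by simp only [hm]; linarith
      have hcand : ∀ x ∈ Ω, m⁻¹ * f x ≤ u x := by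
        intro x hx
        refine candidate_le_relExtremal (hfpsh.const_mul (inv_pos.mpr hm0)) ?_ ?_ hx
        · intro w hw
          have := mul_le_mul_of_nonneg_left (hf0 w hw) (inv_pos.mpr hm0).le
          simpa using this
        · intro w hw
          have h1 : f w ≤ sSup (f '' E) := le_csSup hMbdd (Set.mem_image_of_mem f hw)
          have h2 : f w ≤ -m := by rw [hm]; linarith
          have h3 := mul_le_mul_of_nonneg_left h2 (inv_pos.mpr hm0).le
          calc m⁻¹ * f w ≤ m⁻¹ * (-m) := h3
            _ = -1 := by field_simp
      have hfle : ∀ x ∈ Ω, f x ≤ m * u x := by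
        intro x hx
        have h1 := mul_le_mul_of_nonneg_left (hcand x hx) hm0.le
        calc f x = m * (m⁻¹ * f x) := by field_simp
          _ ≤ m * u x := h1
      refine ⟨m, hm0.le, ?_, ?_⟩
      · have h1 := hfle z hz
        have h2 : m * (u z + 1) = m * u z + m := by ring
        have h3 : f z - sSup (f '' E) = f z + m := by rw [hm]; ring
        linarith
      · have h4 : sSup (f '' A) ≤ m * s := by
          refine csSup_le (hA.image f) ?_
          rintro _ ⟨x, hx, rfl⟩
          have h5 : u x ≤ s := le_csSup hbddA (Set.mem_image_of_mem u hx)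
          exact (hfle x (hAsub hx)).trans (mul_le_mul_of_nonneg_left h5 hm0.le)
        linarith
  rcases eq_or_lt_of_le hsle with hs0 | hsneg
  · -- s = 0
    rcases eq_or_lt_of_le (hu1 z hz) with huz | huz
    · -- u z = -1 : all elements ≤ 0, and 0 is attained
      have hzero : (0:ℝ) ∈ S := by
        have := hmemS 1 one_pos (by rw [hs0]; norm_num)
        simpa [← huz] using this
      have hub : ∀ y ∈ S, y ≤ 0 := by
        intro y hy
        obtain ⟨m, hm0, h1, _⟩ := key y hy
        have h2 : m * (u z + 1) = 0 := by rw [← huz]; ring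
        linarith
      rw [hgoal, le_antisymm (Real.sSup_le hub le_rfl) (le_csSup ⟨0, hub⟩ hzero)]
      rw [← huz, hs0]
      norm_num
    · -- -1 < u z : the candidate set is unbounded above
      have hnb : ¬ BddAbove S := by
        rintro ⟨b, hb⟩
        have ht : 0 < u z + 1 := by linarith
        set c := max 1 ((b + 1) / (u z + 1)) with hc
        have hc0 : 0 < c := lt_of_lt_of_le one_pos (le_max_left _ _)
        have hmem := hmemS c hc0 (by rw [hs0]; simp)
        have hble : c * (u z + 1) ≤ b := hb hmem
        have hcge : (b + 1) / (u z + 1) ≤ c := le_max_right _ _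
        have hgt : b + 1 ≤ c * (u z + 1) := by
          rw [div_le_iff₀ ht] at hcge
          linarith
        linarith
      rw [hgoal, Real.sSup_of_not_bddAbove hnb, hs0]
      simp
  · -- s < 0
    have hsabs : |s| = -s := abs_of_neg hsneg
    have hns : (0:ℝ) < -s := by linarith
    set c := (-s)⁻¹ with hc
    have hc0 : 0 < c := inv_pos.mpr hns
    have hub : ∀ y ∈ S, y ≤ (u z + 1) / (-s) := by
      intro y hy
      obtain ⟨m, hm0, h1, h2⟩ := key y hy
      have e1 : m * (-s) = -(m * s) := by ring
      have hm' : m * (-s) ≤ 1 := by rw [e1]; linarith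
      have hm2 : m ≤ (-s)⁻¹ := by
        rw [← one_div]
        exact (le_div_iff₀ hns).mpr hm'
      calc y ≤ m * (u z + 1) := h1
        _ ≤ (-s)⁻¹ * (u z + 1) := mul_le_mul_of_nonneg_right hm2 huz1
        _ = (u z + 1) / (-s) := by rw [div_eq_mul_inv]; ring
    have hcs : c * s = -1 := by
      rw [hc, inv_mul_eq_div, div_eq_iff hns.ne']
      ring
    have hmem : (c * (u z + 1)) ∈ S := hmemS c hc0 (le_of_eq hcs.symm)
    have heq : c * (u z + 1) = (u z + 1) / (-s) := by
      rw [hc, div_eq_mul_inv]; ring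
    have hge : (u z + 1) / (-s) ≤ sSup S := by
      rw [← heq]
      exact le_csSup ⟨(u z + 1) / (-s), hub⟩ hmem
    have hle' : sSup S ≤ (u z + 1) / (-s) := csSup_le ⟨_, hmem⟩ hub
    rw [hgoal, le_antisymm hle' hge, hsabs]
end
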